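/- For any probability distribution p on ℤ₊ with finite nonzero mean λ, the configuration model branching functional satisfies ζ_CM(p) ≤ λ/2, where ζ_CM(p) = 1 − G_p(η(p∘)). -/
import Mathlib

set_option maxHeartbeats 800000


/-- Probability generating function `G_p(s) = ∑ p(k) s^k`. -/
noncomputable def pgf (p : ℕ → ℝ) (s : ℝ) : ℝ := ∑' k : ℕ, p k * s ^ k

/-- Mean `m₁(p) = ∑ k p(k)`. -/
noncomputable def meanNat (p : ℕ → ℝ) : ℝ := ∑' k : ℕ, (k : ℝ) * p k

/-- Downshifted size biasing `p∘(k) = (k+1) p(k+1) / m₁(p)`. -/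
noncomputable def downshift (p : ℕ → ℝ) : ℕ → ℝ :=
  fun k => ((k : ℝ) + 1) * p (k + 1) / meanNat p

/-- Extinction probability: the smallest fixed point of `G_p` in `[0,1]`. -/
noncomputable def eta (p : ℕ → ℝ) : ℝ :=
  sInf {s : ℝ | s ∈ Set.Icc (0 : ℝ) 1 ∧ pgf p s = s}

/-- Configuration model branching functional `ζ_CM(p) = 1 - G_p(η(p∘))`. -/
noncomputable def zetaCM (p : ℕ → ℝ) : ℝ := 1 - pgf p (eta (downshift p))

/-- Pairing bound for the geometric sum: `∑_{i≤n} x^i ≤ (n+1)/2 (1 + x^n)`. -/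
lemma geom_sum_le_pair (x : ℝ) (hx0 : 0 ≤ x) (hx1 : x ≤ 1) (n : ℕ) :
    ∑ i ∈ Finset.range (n + 1), x ^ i ≤ ((n : ℝ) + 1) / 2 * (1 + x ^ n) := by
  have h2 : (∑ i ∈ Finset.range (n + 1), x ^ i) + (∑ i ∈ Finset.range (n + 1), x ^ i)
      = ∑ i ∈ Finset.range (n + 1), (x ^ i + x ^ (n - i)) := by
    rw [Finset.sum_add_distrib]
    congr 1
    exact (Finset.sum_range_reflect (fun i => x ^ i) (n + 1)).symm
  have hb : ∑ i ∈ Finset.range (n + 1), (x ^ i + x ^ (n - i))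
      ≤ ∑ i ∈ Finset.range (n + 1), (1 + x ^ n) := by
    apply Finset.sum_le_sum
    intro i hi
    have hi' : i ≤ n := Nat.lt_succ_iff.mp (Finset.mem_range.mp hi)
    have hprod : x ^ i * x ^ (n - i) = x ^ n := by
      rw [← pow_add]; congr 1; omega
    have h1 : x ^ i ≤ 1 := pow_le_one₀ hx0 hx1
    have h2' : x ^ (n - i) ≤ 1 := pow_le_one₀ hx0 hx1
    nlinarith [pow_nonneg hx0 i, pow_nonneg hx0 (n - i)]
  rw [Finset.sum_const, Finset.card_range, nsmul_eq_mul] at hb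
  have := h2 ▸ hb
  push_cast at this ⊢
  linarith
/-- Key pointwise inequality: `1 - x^(n+1) ≤ (n+1)(1-x)/2 (1 + x^n)` on `[0,1]`. -/
lemma key_ineq (x : ℝ) (hx0 : 0 ≤ x) (hx1 : x ≤ 1) (n : ℕ) :
    1 - x ^ (n + 1) ≤ ((n : ℝ) + 1) * (1 - x) / 2 * (1 + x ^ n) := by
  have hg : (∑ i ∈ Finset.range (n + 1), x ^ i) * (x - 1) = x ^ (n + 1) - 1 :=
    geom_sum_mul x (n + 1)
  have hgs : 1 - x ^ (n + 1) = (1 - x) * ∑ i ∈ Finset.range (n + 1), x ^ i := by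
    nlinarith [hg]
  rw [hgs]
  have h := geom_sum_le_pair x hx0 hx1 n
  have hx : 0 ≤ 1 - x := by linarith
  calc (1 - x) * ∑ i ∈ Finset.range (n + 1), x ^ i
      ≤ (1 - x) * (((n : ℝ) + 1) / 2 * (1 + x ^ n)) := by
        exact mul_le_mul_of_nonneg_left h hx
    _ = ((n : ℝ) + 1) * (1 - x) / 2 * (1 + x ^ n) := by ring

/-- For any probability distribution `p` on ℤ₊ with finite nonzero mean `λ`,
`ζ_CM(p) ≤ λ/2`. -/
theorem zetaCM_le_half_mean (p : ℕ → ℝ) (hnn : ∀ k, 0 ≤ p k) (hsum : HasSum p 1)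
    (hmom : Summable (fun k : ℕ => (k : ℝ) * p k)) (hmean : meanNat p ≠ 0) :
    zetaCM p ≤ meanNat p / 2 := by
  set lam := meanNat p with hlam
  have hp : Summable p := hsum.summable
  have hlam_nonneg : 0 ≤ lam :=
    tsum_nonneg fun k => mul_nonneg (Nat.cast_nonneg k) (hnn k)
  have hlam_pos : 0 < lam := lt_of_le_of_ne hlam_nonneg (Ne.symm hmean)
  -- summability of the shifted size-biased terms
  have hs1 : Summable (fun k : ℕ => ((k : ℝ) + 1) * p (k + 1)) := by
    have := (summable_nat_add_iff 1).2 hmom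
    refine this.congr fun k => ?_
    push_cast
    ring
  -- total mass of (k+1) p(k+1) is lam
  have hs1_sum : ∑' k : ℕ, ((k : ℝ) + 1) * p (k + 1) = lam := by
    have h0 : ∑' k : ℕ, (k : ℝ) * p k
        = (0 : ℝ) * p 0 + ∑' k : ℕ, ((k + 1 : ℕ) : ℝ) * p (k + 1) := by
      simpa using Summable.tsum_eq_zero_add hmom
    have : ∑' k : ℕ, ((k + 1 : ℕ) : ℝ) * p (k + 1)
        = ∑' k : ℕ, ((k : ℝ) + 1) * p (k + 1) := by
      apply tsum_congr; intro k; push_cast; ring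
    rw [this] at h0
    simp only [zero_mul, zero_add] at h0
    rw [hlam, meanNat, h0]
  set q := downshift p with hq
  have hqs : Summable q := by
    have := hs1.div_const lam
    exact this.congr fun k => rfl
  have hq_nonneg : ∀ k, 0 ≤ q k := fun k =>
    div_nonneg (mul_nonneg (by positivity) (hnn (k + 1))) hlam_nonneg
  have hq_tot : ∑' k, q k = 1 := by
    have : ∑' k, q k = (∑' k : ℕ, ((k : ℝ) + 1) * p (k + 1)) / lam := by
      rw [hq]; exact tsum_div_const
    rw [this, hs1_sum, div_self hmean]
  -- the fixed point set
  set S := {s : ℝ | s ∈ Set.Icc (0 : ℝ) 1 ∧ pgf q s = s} with hS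
  have hcont : ContinuousOn (pgf q) (Set.Icc (0 : ℝ) 1) := by
    apply continuousOn_tsum (u := q)
    · intro k; exact (continuous_pow k).continuousOn.const_smul (q k) |>.congr
        (fun x _ => by simp [smul_eq_mul])
    · exact hqs
    · intro k s hs
      rw [Real.norm_eq_abs, abs_mul, abs_of_nonneg (hq_nonneg k),
        abs_of_nonneg (pow_nonneg hs.1 k)]
      have : s ^ k ≤ 1 := pow_le_one₀ hs.1 hs.2
      nlinarith [hq_nonneg k]
  have hSclosed : IsClosed S := by
    have : S = Set.Icc (0 : ℝ) 1 ∩ (fun s => pgf q s - s) ⁻¹' {0} := by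
      ext s
      simp only [hS, Set.mem_setOf_eq, Set.mem_inter_iff, Set.mem_preimage,
        Set.mem_singleton_iff, sub_eq_zero]
    rw [this]
    exact ContinuousOn.preimage_isClosed_of_isClosed
      (hcont.sub continuousOn_id) isClosed_Icc isClosed_singleton
  have h1S : (1 : ℝ) ∈ S := by
    constructor
    · exact ⟨zero_le_one, le_refl 1⟩
    · rw [pgf]
      simp only [one_pow, mul_one]
      exact hq_tot
  have hbdd : BddBelow S := ⟨0, fun s hs => hs.1.1⟩
  have hetaS : eta q ∈ S := by
    rw [eta]
    exact hSclosed.csInf_mem ⟨1, h1S⟩ hbdd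
  set η := eta q with hη
  obtain ⟨⟨hη0, hη1⟩, hηfix⟩ := hetaS
  -- summability of terms with η^k
  have hpow_le : ∀ k : ℕ, η ^ k ≤ 1 := fun k => pow_le_one₀ hη0 hη1
  have hpow_nn : ∀ k : ℕ, (0:ℝ) ≤ η ^ k := fun k => pow_nonneg hη0 k
  have hs2 : Summable (fun k : ℕ => ((k : ℝ) + 1) * p (k + 1) * η ^ k) := by
    refine Summable.of_nonneg_of_le (fun k => ?_) (fun k => ?_) hs1
    · have := hnn (k + 1); have := hpow_nn k; positivity
    · have h3 : (0:ℝ) ≤ ((k : ℝ) + 1) * p (k + 1) :=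
        mul_nonneg (by positivity) (hnn (k + 1))
      nlinarith [hpow_le k, hpow_nn k]
  -- fixed point equation in unnormalized form
  have hfix : ∑' k : ℕ, ((k : ℝ) + 1) * p (k + 1) * η ^ k = lam * η := by
    have h1 : pgf q η = (∑' k : ℕ, ((k : ℝ) + 1) * p (k + 1) * η ^ k) / lam := by
      rw [pgf]
      have : ∀ k : ℕ, q k * η ^ k = (((k : ℝ) + 1) * p (k + 1) * η ^ k) / lam := by
        intro k; rw [hq]; simp only [downshift]; ring
      rw [tsum_congr this]
      exact tsum_div_const
    rw [h1] at hηfix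
    field_simp at hηfix
    linarith [hηfix]
  -- summability of p k * η^k
  have hpη : Summable (fun k : ℕ => p k * η ^ k) := by
    refine Summable.of_nonneg_of_le (fun k => mul_nonneg (hnn k) (hpow_nn k))
      (fun k => ?_) hp
    nlinarith [hpow_le k, hnn k]
  -- rewrite zetaCM as a tsum
  have hdiff : Summable (fun k : ℕ => p k * (1 - η ^ k)) := by
    refine (hp.sub hpη).congr fun k => ?_
    ring
  have hz : HasSum (fun k : ℕ => p k * (1 - η ^ k)) (1 - pgf p η) := by
    have h1 : HasSum (fun k : ℕ => p k * η ^ k) (pgf p η) := hpη.hasSum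
    have h2 := hsum.sub h1
    simpa [mul_one_sub] using h2
  have hzeta : zetaCM p = ∑' k : ℕ, p k * (1 - η ^ k) := by
    rw [zetaCM, ← hq, ← hη, ← hz.tsum_eq]
  -- shift the sum
  have hshift : ∑' k : ℕ, p k * (1 - η ^ k)
      = ∑' k : ℕ, p (k + 1) * (1 - η ^ (k + 1)) := by
    rw [Summable.tsum_eq_zero_add hdiff]
    simp
  -- the bounding sum
  have hbig : Summable (fun k : ℕ =>
      (1 - η) / 2 * (((k : ℝ) + 1) * p (k + 1) * (1 + η ^ k))) := by
    apply Summable.mul_left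
    refine (hs1.add hs2).congr fun k => ?_
    ring
  have hdiff1 : Summable (fun k : ℕ => p (k + 1) * (1 - η ^ (k + 1))) :=
    (summable_nat_add_iff (f := fun k : ℕ => p k * (1 - η ^ k)) 1).2 hdiff
  have hbound : ∑' k : ℕ, p (k + 1) * (1 - η ^ (k + 1))
      ≤ ∑' k : ℕ, (1 - η) / 2 * (((k : ℝ) + 1) * p (k + 1) * (1 + η ^ k)) := by
    refine Summable.tsum_le_tsum (fun k => ?_) hdiff1 hbig
    have hk := key_ineq η hη0 hη1 k
    have hpk := hnn (k + 1)
    calc p (k + 1) * (1 - η ^ (k + 1))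
        ≤ p (k + 1) * (((k : ℝ) + 1) * (1 - η) / 2 * (1 + η ^ k)) :=
          mul_le_mul_of_nonneg_left hk hpk
      _ = (1 - η) / 2 * (((k : ℝ) + 1) * p (k + 1) * (1 + η ^ k)) := by ring
  have hbig_sum : ∑' k : ℕ, (1 - η) / 2 * (((k : ℝ) + 1) * p (k + 1) * (1 + η ^ k))
      = (1 - η) / 2 * (lam + lam * η) := by
    rw [tsum_mul_left]
    congr 1
    have : ∀ k : ℕ, ((k : ℝ) + 1) * p (k + 1) * (1 + η ^ k)
        = ((k : ℝ) + 1) * p (k + 1) + ((k : ℝ) + 1) * p (k + 1) * η ^ k := by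
      intro k; ring
    rw [tsum_congr this, (hs1.hasSum.add hs2.hasSum).tsum_eq, hs1_sum, hfix]
  rw [hzeta, hshift]
  calc ∑' k : ℕ, p (k + 1) * (1 - η ^ (k + 1))
      ≤ (1 - η) / 2 * (lam + lam * η) := by rw [← hbig_sum]; exact hbound
    _ = lam * (1 - η ^ 2) / 2 := by ring
    _ ≤ lam / 2 := by nlinarith [sq_nonneg η]
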